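/- Let H be a real Hilbert space with a Hilbert basis (b k)_{k∈ι}, L : H → H a continuous linear operator, ψ : Fin n → H an orthonormal family, K the (finite-dimensional, hence closed) span of {ψ 1, …, ψ n}, and P the orthogonal projection of H onto K. Define the n × n real matrix M by M i j = ⟪L(ψ i), L(ψ j)⟫. Then the family k ↦ ‖(P ∘ L† ∘ L ∘ P)(b k)‖² is summable and ∑' k, ‖(P ∘ L† ∘ L ∘ P)(b k)‖² = ∑_{i} ∑_{j} (M i j)². That is, the Hilbert–Schmidt norm of P† L† L P equals the Frobenius norm of M: ‖P† L† L P‖_{S₂} = ‖M‖_F. -/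
import Mathlib


open scoped InnerProductSpace

set_option maxHeartbeats 1000000 in
/-- The Hilbert–Schmidt norm of `P† L† L P`, where `P` is the orthogonal projection onto the span
of an orthonormal family `ψ`, equals the Frobenius norm of the matrix `M i j = ⟪L ψ_i, L ψ_j⟫`. -/
theorem stmt_6 {ι H : Type*} [NormedAddCommGroup H] [InnerProductSpace ℝ H] [CompleteSpace H]
    (b : HilbertBasis ι ℝ H) (L : H →L[ℝ] H)
    {n : ℕ} (ψ : Fin n → H) (hψ : Orthonormal ℝ ψ)
    (K : Submodule ℝ H) (hK : K = Submodule.span ℝ (Set.range ψ))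
    (P : H →L[ℝ] H) (hPK : ∀ x ∈ K, P x = x) (hPperp : ∀ x ∈ Kᗮ, P x = 0)
    (M : Matrix (Fin n) (Fin n) ℝ) (hM : ∀ i j, M i j = ⟪L (ψ i), L (ψ j)⟫_ℝ) :
    (Summable fun k => ‖(P.comp (((ContinuousLinearMap.adjoint L).comp L).comp P)) (b k)‖ ^ 2) ∧
      ∑' k, ‖(P.comp (((ContinuousLinearMap.adjoint L).comp L).comp P)) (b k)‖ ^ 2
        = ∑ i, ∑ j, M i j ^ 2 := by
  classical
  have hψK : ∀ i, ψ i ∈ K := fun i => hK ▸ Submodule.subset_span ⟨i, rfl⟩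
  -- explicit formula for P
  have hP : ∀ x : H, P x = ∑ i, ⟪ψ i, x⟫_ℝ • ψ i := by
    intro x
    set f : H := ∑ i, ⟪ψ i, x⟫_ℝ • ψ i with hf
    have hfK : f ∈ K := Submodule.sum_mem _ fun i _ => Submodule.smul_mem _ _ (hψK i)
    have hperp : x - f ∈ Kᗮ := by
      rw [Submodule.mem_orthogonal]
      intro u hu
      rw [hK] at hu
      induction hu using Submodule.span_induction with
      | mem u hu =>
        obtain ⟨j, rfl⟩ := hu
        have horth := orthonormal_iff_ite.mp hψ
        simp [hf, inner_sub_right, inner_sum, real_inner_smul_right, horth]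
      | zero => simp
      | add u v _ _ hu hv => rw [inner_add_left, hu, hv]; ring
      | smul c u _ hu => rw [inner_smul_left, hu]; simp
    have := congrArg P (show x = f + (x - f) by abel)
    rw [this, map_add, hPK f hfK, hPperp _ hperp, add_zero]
  -- the operator applied to x
  set T := P.comp (((ContinuousLinearMap.adjoint L).comp L).comp P) with hT
  have hTx : ∀ x : H, T x = ∑ j, (∑ i, M j i * ⟪ψ i, x⟫_ℝ) • ψ j := by
    intro x
    have : T x = P ((ContinuousLinearMap.adjoint L) (L (P x))) := rfl
    rw [this, hP x, hP]
    congr 1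
    funext j
    congr 1
    simp only [map_sum, map_smul, inner_sum, real_inner_smul_right,
      ContinuousLinearMap.adjoint_inner_right]
    refine Finset.sum_congr rfl fun i _ => ?_
    rw [hM]
    ring
  -- norm squared
  have hnorm : ∀ x : H, ‖T x‖ ^ 2 = ∑ j, (∑ i, M j i * ⟪ψ i, x⟫_ℝ) ^ 2 := by
    intro x
    rw [← real_inner_self_eq_norm_sq, hTx x, hψ.inner_sum]
    simp [sq]
  -- expand into double sums
  have hexp : ∀ x : H, ‖T x‖ ^ 2 =
      ∑ j, ∑ i, ∑ i', (M j i * M j i') * (⟪ψ i, x⟫_ℝ * ⟪x, ψ i'⟫_ℝ) := by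
    intro x
    rw [hnorm x]
    refine Finset.sum_congr rfl fun j _ => ?_
    rw [sq, Finset.sum_mul_sum]
    refine Finset.sum_congr rfl fun i _ => Finset.sum_congr rfl fun i' _ => ?_
    rw [real_inner_comm x (ψ i')]; ring
  have hsumm : ∀ (j i i' : Fin n),
      Summable fun k => (M j i * M j i') * (⟪ψ i, b k⟫_ℝ * ⟪b k, ψ i'⟫_ℝ) :=
    fun j i i' => (b.summable_inner_mul_inner (ψ i) (ψ i')).mul_left _
  have hS : Summable fun k => ‖T (b k)‖ ^ 2 := by
    have : Summable fun k =>
        ∑ j, ∑ i, ∑ i', (M j i * M j i') * (⟪ψ i, b k⟫_ℝ * ⟪b k, ψ i'⟫_ℝ) :=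
      summable_sum fun j _ => summable_sum fun i _ => summable_sum fun i' _ => hsumm j i i'
    exact this.congr fun k => (hexp (b k)).symm
  refine ⟨hS, ?_⟩
  calc ∑' k, ‖T (b k)‖ ^ 2
      = ∑' k, ∑ j, ∑ i, ∑ i', (M j i * M j i') * (⟪ψ i, b k⟫_ℝ * ⟪b k, ψ i'⟫_ℝ) := by
        exact tsum_congr fun k => hexp (b k)
    _ = ∑ j, ∑ i, ∑ i', (M j i * M j i') * ⟪ψ i, ψ i'⟫_ℝ := by
        rw [Summable.tsum_finsetSum fun j _ => summable_sum fun i _ => summable_sum fun i' _ => hsumm j i i']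
        refine Finset.sum_congr rfl fun j _ => ?_
        rw [Summable.tsum_finsetSum fun i _ => summable_sum fun i' _ => hsumm j i i']
        refine Finset.sum_congr rfl fun i _ => ?_
        rw [Summable.tsum_finsetSum fun i' _ => hsumm j i i']
        refine Finset.sum_congr rfl fun i' _ => ?_
        rw [tsum_mul_left, b.tsum_inner_mul_inner]
    _ = ∑ j, ∑ i, M j i ^ 2 := by
        refine Finset.sum_congr rfl fun j _ => ?_
        simp only [orthonormal_iff_ite.mp hψ, mul_ite, mul_one, mul_zero]
        rw [Finset.sum_congr rfl fun i _ => Finset.sum_ite_eq (Finset.univ) i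
          (fun i' => M j i * M j i')]
        simp [sq]
    _ = ∑ i, ∑ j, M i j ^ 2 := rfl
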